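/- Let M ≥ 2, t ∈ (0, 1/(2M)), and let p, q be probability vectors with ∑_{ℓ:p_ℓ ≥ t}(p_ℓ - t) > 1/2 and ∑_{ℓ:q_ℓ ≥ t}(q_ℓ - t) > 1/2, and suppose |p_m - q_m| ≤ ε for all m. Then for the truncations p^t and q^t defined by the proportional truncation rule, |p^t_m - q^t_m| ≤ (4M + 1) * ε for all m ∈ {1,...,M}. -/

import Mathlib

/-- The truncation of a vector `p` at level `t`: entries below `t` are raised to `t`,
entries at least `t` are lowered proportionally so the total mass is preserved. -/
noncomputable def trunc {M : ℕ} (t : ℝ) (p : Fin M → ℝ) : Fin M → ℝ :=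
  fun m =>
    if p m < t then t
    else p m - (p m - t) *
        (∑ j ∈ Finset.univ.filter (fun j => p j < t), (t - p j)) /
        (∑ l ∈ Finset.univ.filter (fun l => t ≤ p l), (p l - t))

lemma filter_lt_eq {M : ℕ} (t : ℝ) (p : Fin M → ℝ) :
    ∑ j ∈ Finset.univ.filter (fun j => p j < t), (t - p j) = ∑ j, max (t - p j) 0 := by
  rw [Finset.sum_filter]
  refine Finset.sum_congr rfl fun j _ => ?_
  split_ifs with h
  · rw [max_eq_left]; linarith
  · rw [max_eq_right]; push_neg at h; linarith

lemma filter_ge_eq {M : ℕ} (t : ℝ) (p : Fin M → ℝ) :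
    ∑ l ∈ Finset.univ.filter (fun l => t ≤ p l), (p l - t) = ∑ l, max (p l - t) 0 := by
  rw [Finset.sum_filter]
  refine Finset.sum_congr rfl fun j _ => ?_
  split_ifs with h
  · rw [max_eq_left]; linarith
  · rw [max_eq_right]; push_neg at h; linarith

lemma max_lip {M : ℕ} (ε : ℝ) (f g : Fin M → ℝ) (h : ∀ m, |f m - g m| ≤ ε) :
    |∑ m, max (f m) 0 - ∑ m, max (g m) 0| ≤ M * ε := by
  rw [← Finset.sum_sub_distrib]
  calc |∑ m, (max (f m) 0 - max (g m) 0)| ≤ ∑ m, |max (f m) 0 - max (g m) 0| :=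
        Finset.abs_sum_le_sum_abs _ _
    _ ≤ ∑ _m : Fin M, ε := Finset.sum_le_sum fun m _ =>
        le_trans (abs_max_sub_max_le_abs _ _ _) (h m)
    _ = M * ε := by simp [Finset.sum_const, Finset.card_univ, mul_comm]

set_option maxHeartbeats 1600000 in
theorem trunc_lipschitz (M : ℕ) (hM : 2 ≤ M) (t ε : ℝ)
    (ht : 0 < t) (htM : t < 1 / (2 * M))
    (p q : Fin M → ℝ) (hp0 : ∀ m, 0 ≤ p m) (hq0 : ∀ m, 0 ≤ q m)
    (hp1 : ∑ m, p m = 1) (hq1 : ∑ m, q m = 1)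
    (hpsum : 1 / 2 < ∑ l ∈ Finset.univ.filter (fun l => t ≤ p l), (p l - t))
    (hqsum : 1 / 2 < ∑ l ∈ Finset.univ.filter (fun l => t ≤ q l), (q l - t))
    (hpq : ∀ m, |p m - q m| ≤ ε) :
    ∀ m, |trunc t p m - trunc t q m| ≤ (4 * M + 1) * ε := by
  have hM1 : (1:ℝ) ≤ (M:ℝ) := by exact_mod_cast Nat.one_le_of_lt hM
  have hε : 0 ≤ ε := le_trans (abs_nonneg _) (hpq ⟨0, by omega⟩)
  have hε' : ε ≤ (4 * M + 1) * ε := by nlinarith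
  have hMt : (M:ℝ) * t ≤ 1 / 2 := by
    rw [lt_div_iff₀ (by positivity)] at htM
    nlinarith
  intro m
  simp only [trunc]
  set A := ∑ j ∈ Finset.univ.filter (fun j => p j < t), (t - p j) with hAdef
  set B := ∑ l ∈ Finset.univ.filter (fun l => t ≤ p l), (p l - t) with hBdef
  set C := ∑ j ∈ Finset.univ.filter (fun j => q j < t), (t - q j) with hCdef
  set D := ∑ l ∈ Finset.univ.filter (fun l => t ≤ q l), (q l - t) with hDdef
  have hA0 : 0 ≤ A := by
    rw [hAdef, filter_lt_eq]
    exact Finset.sum_nonneg fun i _ => le_max_right _ _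
  have hC0 : 0 ≤ C := by
    rw [hCdef, filter_lt_eq]
    exact Finset.sum_nonneg fun i _ => le_max_right _ _
  have hA2 : A ≤ 1 / 2 := by
    have : A ≤ (M:ℝ) * t := by
      rw [hAdef, filter_lt_eq]
      calc ∑ j, max (t - p j) 0 ≤ ∑ _j : Fin M, t :=
            Finset.sum_le_sum fun i _ => max_le (by linarith [hp0 i]) ht.le
        _ = (M:ℝ) * t := by simp [Finset.sum_const, Finset.card_univ, mul_comm]
    linarith
  have hC2 : C ≤ 1 / 2 := by
    have : C ≤ (M:ℝ) * t := by
      rw [hCdef, filter_lt_eq]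
      calc ∑ j, max (t - q j) 0 ≤ ∑ _j : Fin M, t :=
            Finset.sum_le_sum fun i _ => max_le (by linarith [hq0 i]) ht.le
        _ = (M:ℝ) * t := by simp [Finset.sum_const, Finset.card_univ, mul_comm]
    linarith
  have hB0 : (0:ℝ) < B := lt_trans (by norm_num) hpsum
  have hD0 : (0:ℝ) < D := lt_trans (by norm_num) hqsum
  have hD1 : D ≤ 1 := by
    rw [hDdef, filter_ge_eq]
    calc ∑ l, max (q l - t) 0 ≤ ∑ l, q l :=
          Finset.sum_le_sum fun i _ => max_le (by linarith [ht]) (hq0 i)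
      _ = 1 := hq1
  have hAC : |A - C| ≤ (M:ℝ) * ε := by
    rw [hAdef, hCdef, filter_lt_eq, filter_lt_eq]
    exact max_lip ε _ _ fun m => by
      have := hpq m
      rw [abs_sub_comm (p m) (q m)] at this
      calc |(t - p m) - (t - q m)| = |q m - p m| := by ring_nf
        _ ≤ ε := this
  have hBD : |B - D| ≤ (M:ℝ) * ε := by
    rw [hBdef, hDdef, filter_ge_eq, filter_ge_eq]
    exact max_lip ε _ _ fun m => by
      calc |(p m - t) - (q m - t)| = |p m - q m| := by ring_nf
        _ ≤ ε := hpq m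
  have hPB : t ≤ p m → p m - t ≤ B := fun hpm => by
    rw [hBdef]
    exact Finset.single_le_sum (f := fun l => p l - t)
      (fun i hi => by
        simp only [Finset.mem_filter, Finset.mem_univ, true_and] at hi
        linarith)
      (by simp [hpm])
  have hQD : t ≤ q m → q m - t ≤ D := fun hqm => by
    rw [hDdef]
    exact Finset.single_le_sum (f := fun l => q l - t)
      (fun i hi => by
        simp only [Finset.mem_filter, Finset.mem_univ, true_and] at hi
        linarith)
      (by simp [hqm])
  have hpqm := hpq m
  have hp0m := hp0 m
  have hq0m := hq0 m
  clear hAdef hBdef hCdef hDdef hpq hp0 hq0 hp1 hq1 htM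
  clear_value A B C D
  generalize p m = pm at *
  generalize q m = qm at *
  by_cases hp : pm < t <;> by_cases hq : qm < t <;>
      simp only [hp, hq, if_true, if_false, if_pos, if_neg, not_false_iff]
  · rw [sub_self, abs_zero]; linarith
  · -- pm < t ≤ qm
    push_neg at hq
    have hqm : 0 ≤ qm - t := by linarith
    have hx0 : 0 ≤ (qm - t) * C / D := div_nonneg (mul_nonneg hqm hC0) hD0.le
    have hx1 : (qm - t) * C / D ≤ qm - t := by
      rw [div_le_iff₀ hD0]
      nlinarith
    have h1 : qm - t ≤ ε := by
      have := hpqm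
      rw [abs_le] at this
      linarith [this.1]
    rw [abs_le]
    constructor <;> linarith
  · -- qm < t ≤ pm
    push_neg at hp
    have hpm : 0 ≤ pm - t := by linarith
    have hx0 : 0 ≤ (pm - t) * A / B := div_nonneg (mul_nonneg hpm hA0) hB0.le
    have hx1 : (pm - t) * A / B ≤ pm - t := by
      rw [div_le_iff₀ hB0]
      nlinarith
    have h1 : pm - t ≤ ε := by
      have := hpqm
      rw [abs_le] at this
      linarith [this.2]
    rw [abs_le]
    constructor <;> linarith
  · -- both ≥ t
    push_neg at hp hq
    set a := pm - t with hadef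
    set b := qm - t with hbdef
    have ha0 : 0 ≤ a := by rw [hadef]; linarith
    have hb0 : 0 ≤ b := by rw [hbdef]; linarith
    have hab : |a - b| ≤ ε := by
      have : a - b = pm - qm := by rw [hadef, hbdef]; ring
      rw [this]; exact hpqm
    have hbD : b ≤ D := hQD hq
    clear_value a b
    have hnum : |A * D - C * B| ≤ 3 / 2 * ((M:ℝ) * ε) := by
      have heq : A * D - C * B = (A - C) * D + C * (D - B) := by ring
      rw [heq]
      calc |(A - C) * D + C * (D - B)| ≤ |(A - C) * D| + |C * (D - B)| := abs_add_le _ _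
        _ = |A - C| * D + C * |D - B| := by
            rw [abs_mul, abs_mul, abs_of_nonneg hD0.le, abs_of_nonneg hC0]
        _ ≤ ((M:ℝ) * ε) * 1 + (1/2) * ((M:ℝ) * ε) := by
            have hMε : 0 ≤ (M:ℝ) * ε := by positivity
            have hDB : |D - B| ≤ (M:ℝ) * ε := by rwa [abs_sub_comm]
            gcongr
        _ = 3 / 2 * ((M:ℝ) * ε) := by ring
    have t1 : |(a - b) * (A / B)| ≤ ε := by
      rw [abs_mul]
      have hr0 : 0 ≤ A / B := div_nonneg hA0 hB0.le
      have hr1 : A / B ≤ 1 := by rw [div_le_one hB0]; linarith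
      calc |a - b| * |A / B| ≤ ε * 1 := by
            rw [abs_of_nonneg hr0]
            exact mul_le_mul hab hr1 hr0 hε
        _ = ε := mul_one ε
    have t2 : |b * (A / B - C / D)| ≤ 3 * ((M:ℝ) * ε) := by
      have heq : A / B - C / D = (A * D - C * B) / (B * D) := by
        field_simp
      rw [heq, abs_mul, abs_div, abs_of_nonneg hb0, abs_of_nonneg (by positivity : (0:ℝ) ≤ B * D),
        ← mul_div_assoc]
      rw [div_le_iff₀ (by positivity : (0:ℝ) < B * D)]
      have h1 : b * |A * D - C * B| ≤ D * (3 / 2 * ((M:ℝ) * ε)) :=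
        mul_le_mul hbD hnum (abs_nonneg _) hD0.le
      have hMε : (0:ℝ) ≤ (M:ℝ) * ε := by positivity
      have h2 : D * (3 / 2 * ((M:ℝ) * ε)) ≤ 3 * ((M:ℝ) * ε) * (B * D) := by
        nlinarith [mul_nonneg hMε hD0.le]
      linarith
    have hsplit : a * A / B - b * C / D = (a - b) * (A / B) + b * (A / B - C / D) := by
      field_simp
      ring
    calc |pm - a * A / B - (qm - b * C / D)|
        = |(pm - qm) - (a * A / B - b * C / D)| := by ring_nf
      _ ≤ |pm - qm| + |a * A / B - b * C / D| := abs_sub _ _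
      _ ≤ ε + (ε + 3 * ((M:ℝ) * ε)) := by
          refine add_le_add (hpqm) ?_
          rw [hsplit]
          calc |(a - b) * (A / B) + b * (A / B - C / D)|
              ≤ |(a - b) * (A / B)| + |b * (A / B - C / D)| := abs_add_le _ _
            _ ≤ ε + 3 * ((M:ℝ) * ε) := add_le_add t1 t2
      _ ≤ (4 * M + 1) * ε := by nlinarith
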